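/- Let L/ℚ be a finite Galois extension with Galois group G, let I₁, …, I_d be ideals of O_L and b₁, …, b_d ∈ L^D be L-linearly independent vectors, forming the module M = ⊕_k I_k b_k. For each k let Δ_k = {σ ∈ G : σ(I_k b_k) = I_k b_k} (where σ acts coordinatewise on vectors) and K_k its fixed field. Then there exists α_k ∈ L^× such that b_k = α_k · b_k′ with b_k′ ∈ K_k^D. -/

import Mathlib

open NumberField

/-- Let L/ℚ be Galois, I₁,…,I_d nonzero ideals of O_L and b₁,…,b_d ∈ L^D L-linearly
independent. For each k, letting Δ_k be the subgroup of the Galois group fixing the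
pseudo-ideal I_k b_k setwise (acting coordinatewise) and K_k its fixed field, there is
α_k ∈ L^× and b_k′ ∈ K_k^D with b_k = α_k·b_k′. -/
theorem stmt18 (L : Type) [Field L] [NumberField L] [IsGalois ℚ L] (d D : ℕ)
    (I : Fin d → Ideal (𝓞 L)) (hI : ∀ k, I k ≠ ⊥)
    (b : Fin d → Fin D → L) (hb : LinearIndependent L b)
    (Δ : Fin d → Subgroup (L ≃ₐ[ℚ] L))
    (hΔ : ∀ k (σ : L ≃ₐ[ℚ] L), σ ∈ Δ k ↔
      (fun v : Fin D → L => fun j => σ (v j)) ''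
          {v | ∃ x ∈ I k, v = fun j => (x : L) * b k j}
        = {v | ∃ x ∈ I k, v = fun j => (x : L) * b k j}) :
    ∀ k, ∃ (α : L) (b' : Fin D → L), α ≠ 0 ∧
      (∀ j, b' j ∈ IntermediateField.fixedField (Δ k)) ∧
      ∀ j, b k j = α * b' j := by
  intro k
  classical
  haveI : Fintype (Δ k) := Fintype.ofFinite _
  -- b k is a nonzero vector
  have hbk : b k ≠ 0 := hb.ne_zero k
  obtain ⟨j0, hj0⟩ : ∃ j, b k j ≠ 0 := by
    by_contra h
    push_neg at h
    exact hbk (funext h)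
  -- key property: σ ∈ Δ k maps x • b to y • b
  have key : ∀ σ : Δ k, ∀ x ∈ I k, ∃ y ∈ I k,
      ∀ j, (σ : L ≃ₐ[ℚ] L) ((x : L) * b k j) = (y : L) * b k j := by
    intro σ x hx
    have h1 := (hΔ k σ).mp σ.2
    have h2 : (fun j => (σ : L ≃ₐ[ℚ] L) ((x : L) * b k j)) ∈
        {v : Fin D → L | ∃ x ∈ I k, v = fun j => (x : L) * b k j} := by
      rw [← h1]
      exact ⟨fun j => (x : L) * b k j, ⟨x, hx, rfl⟩, rfl⟩
    obtain ⟨y, hy, hy2⟩ := h2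
    exact ⟨y, hy, fun j => congrFun hy2 j⟩
  -- the "trace" map y ↦ ∑ σ ∈ Δ k, σ y is not identically zero
  have Tne : ∃ y : L, (∑ σ : Δ k, (σ : L ≃ₐ[ℚ] L) y) ≠ 0 := by
    by_contra h
    push_neg at h
    have li := (linearIndependent_monoidHom L L).comp
      (fun σ : Δ k => ((σ : L ≃ₐ[ℚ] L) : L →* L))
      (by
        intro σ τ hst
        have : (σ : L ≃ₐ[ℚ] L) = (τ : L ≃ₐ[ℚ] L) := by
          ext z
          exact congrFun (congrArg DFunLike.coe hst) z
        exact Subtype.ext this)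
    have := Fintype.linearIndependent_iff.mp li (fun _ => (1 : L)) ?_ ⟨1, (Δ k).one_mem⟩
    · exact one_ne_zero this
    · funext z
      simpa using h z
  obtain ⟨y, hy⟩ := Tne
  -- pick a nonzero element of I k
  obtain ⟨a, haI, ha0⟩ := Submodule.exists_mem_ne_zero_of_ne_bot (hI k)
  -- clear denominators: find x ∈ I k with x * b k j0 a nonzero ℤ-multiple of y
  have halg : IsAlgebraic ℤ (y / ((a : L) * b k j0)) :=
    (IsFractionRing.isAlgebraic_iff ℤ ℚ L).mpr (Algebra.IsAlgebraic.isAlgebraic _)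
  obtain ⟨w, m, hm0, hmw⟩ : ∃ (w : integralClosure ℤ L) (m : ℤ), m ≠ 0 ∧
      y / ((a : L) * b k j0) * algebraMap ℤ L m = w := by
    obtain ⟨m, hm0, hint⟩ := halg.exists_integral_multiple
    exact ⟨⟨_, hint⟩, m, hm0, by rw [mul_comm, ← Algebra.smul_def]⟩
  have ha0' : (a : L) ≠ 0 := by exact_mod_cast ha0
  let w' : 𝓞 L := w
  have hw' : (w' : L) = (w : L) := rfl
  set x : 𝓞 L := a * w' with hxdef
  have hxI : x ∈ I k := Ideal.mul_mem_right _ _ haI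
  have hmw' : (m : L) * (y / ((a : L) * b k j0)) = (w : L) := by
    rw [← hmw]; norm_num [algebraMap_int_eq]; ring
  have hxL : (x : L) = (a : L) * (w : L) := by rw [hxdef]; push_cast [hw']; ring
  have hxb : (x : L) * b k j0 = (m : L) * y := by
    rw [hxL, ← hmw']
    field_simp
  -- the trace of x * b k j0 is nonzero
  have hT : (∑ σ : Δ k, (σ : L ≃ₐ[ℚ] L) ((x : L) * b k j0)) ≠ 0 := by
    rw [hxb]
    have : ∀ σ : Δ k, (σ : L ≃ₐ[ℚ] L) ((m : L) * y)
        = (m : L) * (σ : L ≃ₐ[ℚ] L) y := by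
      intro σ
      rw [map_mul]
      norm_cast
      rw [map_intCast]
    rw [Finset.sum_congr rfl (fun σ _ => this σ), ← Finset.mul_sum]
    exact mul_ne_zero (by exact_mod_cast hm0) hy
  -- choose y_σ for each σ
  choose yf hyfI hyf using fun σ : Δ k => key σ x hxI
  set c : L := ∑ σ : Δ k, (yf σ : L) with hc
  have hcb : ∀ j, c * b k j = ∑ σ : Δ k, (σ : L ≃ₐ[ℚ] L) ((x : L) * b k j) := by
    intro j
    rw [hc, Finset.sum_mul]
    exact Finset.sum_congr rfl fun σ _ => (hyf σ j).symm
  have hc0 : c ≠ 0 := by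
    intro h
    apply hT
    rw [← hcb j0, h, zero_mul]
  refine ⟨c⁻¹, fun j => c * b k j, inv_ne_zero hc0, ?_, ?_⟩
  · intro j
    intro τ
    show (τ : L ≃ₐ[ℚ] L) (c * b k j) = c * b k j
    rw [hcb j, map_sum]
    exact Fintype.sum_equiv (Equiv.mulLeft τ) _ _ (fun σ => rfl)
  · intro j
    field_simp
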